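/- Let ρ : M_J(ℂ) → M_n(ℂ) be a unital 2-positive map, τ the normalized trace on M_n(ℂ), u ∈ M_n(ℂ) unitary, 0 < ε < 1/2, and x ∈ M_J(ℂ) a contraction with ‖u − ρ(x)‖₂ < ε. Then for every unitary v₀ ∈ M_J(ℂ) with x = v₀|x|, we have ‖u − ρ(v₀)‖₂ < 3ε^{1/2}. -/

import Mathlib

open ComplexOrder

/-- A linear map between matrix algebras is 2-positive if its amplification to
2×2 block matrices preserves positive semidefiniteness. -/
def TwoPositive {J n : ℕ}
    (ρ : Matrix (Fin J) (Fin J) ℂ →ₗ[ℂ] Matrix (Fin n) (Fin n) ℂ) : Prop :=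
  ∀ a : Matrix (Fin 2 × Fin J) (Fin 2 × Fin J) ℂ, a.PosSemidef →
    (Matrix.of fun p q : Fin 2 × Fin n =>
      ρ (Matrix.of fun i j => a (p.1, i) (q.1, j)) p.2 q.2).PosSemidef

section Aux

open Matrix

lemma trace_nonneg_of_psd {m : ℕ} {A : Matrix (Fin m) (Fin m) ℂ} (hA : A.PosSemidef) :
    0 ≤ A.trace := by
  rw [Matrix.trace]
  refine Finset.sum_nonneg fun i _ => ?_
  have := hA.dotProduct_mulVec_nonneg (Pi.single i 1)
  simpa [Matrix.diag, dotProduct, Matrix.mulVec, Pi.single_apply, Finset.mul_sum] using this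

/-- entrywise square sum -/
noncomputable def Sq {m : ℕ} (a : Matrix (Fin m) (Fin m) ℂ) : ℝ := ∑ j, ∑ i, ‖a i j‖^2

lemma Sq_nonneg {m : ℕ} (a : Matrix (Fin m) (Fin m) ℂ) : 0 ≤ Sq a :=
  Finset.sum_nonneg fun _ _ => Finset.sum_nonneg fun _ _ => sq_nonneg _

lemma trace_star_self {m : ℕ} (a : Matrix (Fin m) (Fin m) ℂ) :
    (Matrix.trace (star a * a)) = ((Sq a : ℝ) : ℂ) := by
  rw [Matrix.trace, Sq]
  push_cast
  refine Finset.sum_congr rfl fun j _ => ?_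
  rw [Matrix.diag, Matrix.mul_apply]
  refine Finset.sum_congr rfl fun i _ => ?_
  simp [Matrix.conjTranspose_apply, Complex.mul_conj', Complex.normSq_eq_norm_sq]
  ring_nf
  simp [Complex.conj_mul', Complex.sq_norm]

lemma amp_posSemidef {J : ℕ} (f : Fin 2 → Matrix (Fin J) (Fin J) ℂ) :
    (Matrix.of fun p q : Fin 2 × Fin J => ((f p.1)ᴴ * f q.1) p.2 q.2).PosSemidef := by
  have h : (Matrix.of fun p q : Fin 2 × Fin J => ((f p.1)ᴴ * f q.1) p.2 q.2)
      = (Matrix.of fun r q : Fin 2 × Fin J =>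
          if r.1 = 0 then f q.1 r.2 q.2 else 0)ᴴ *
        (Matrix.of fun r q : Fin 2 × Fin J => if r.1 = 0 then f q.1 r.2 q.2 else 0) := by
    ext ⟨c, i⟩ ⟨d, j⟩
    simp [Matrix.mul_apply, Matrix.conjTranspose_apply, Fintype.sum_prod_type,
      Fin.sum_univ_two]
  rw [h]
  exact Matrix.posSemidef_conjTranspose_mul_self _

lemma amp_rho {J n : ℕ} (ρ : Matrix (Fin J) (Fin J) ℂ →ₗ[ℂ] Matrix (Fin n) (Fin n) ℂ)
    (h2 : TwoPositive ρ) (f : Fin 2 → Matrix (Fin J) (Fin J) ℂ) :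
    (Matrix.of fun p q : Fin 2 × Fin n =>
      ρ ((f p.1)ᴴ * f q.1) p.2 q.2).PosSemidef := by
  have := h2 _ (amp_posSemidef f)
  convert this using 3
  rfl

open scoped MatrixOrder in
lemma psd_sqrt_exists {m : ℕ} {a : Matrix (Fin m) (Fin m) ℂ} (ha : a.PosSemidef) :
    ∃ q : Matrix (Fin m) (Fin m) ℂ, qᴴ = q ∧ q * q = a := by
  obtain ⟨X, hX, -, h⟩ := CFC.exists_sqrt_of_isSelfAdjoint_of_quasispectrumRestricts
    (show IsSelfAdjoint a from ha.isHermitian)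
    (QuasispectrumRestricts.nnreal_of_nonneg (Matrix.nonneg_iff_posSemidef.mpr ha))
  exact ⟨X, hX, h⟩

lemma rho_pos {J n : ℕ} (ρ : Matrix (Fin J) (Fin J) ℂ →ₗ[ℂ] Matrix (Fin n) (Fin n) ℂ)
    (h2 : TwoPositive ρ) {a : Matrix (Fin J) (Fin J) ℂ} (ha : a.PosSemidef) :
    (ρ a).PosSemidef := by
  obtain ⟨b, rfl⟩ : ∃ b : Matrix (Fin J) (Fin J) ℂ, a = bᴴ * b := by
    obtain ⟨q, hq, hq2⟩ := psd_sqrt_exists ha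
    exact ⟨q, by rw [hq, hq2]⟩
  have h := (amp_rho ρ h2 ![b, 0]).submatrix (fun i : Fin n => ((0 : Fin 2), i))
  convert h using 2
  rfl

lemma rho_star {J n : ℕ} (ρ : Matrix (Fin J) (Fin J) ℂ →ₗ[ℂ] Matrix (Fin n) (Fin n) ℂ)
    (h2 : TwoPositive ρ) (a : Matrix (Fin J) (Fin J) ℂ) :
    ρ aᴴ = (ρ a)ᴴ := by
  have h := (amp_rho ρ h2 ![1, a]).isHermitian
  ext i j
  have := h.apply ((1 : Fin 2), i) ((0 : Fin 2), j)
  simpa [Matrix.conjTranspose_apply] using this.symm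

def sumProdEquiv (n : ℕ) : (Fin n) ⊕ (Fin n) ≃ Fin 2 × Fin n where
  toFun := Sum.elim (fun i => (0, i)) (fun i => (1, i))
  invFun := fun p => if p.1 = 0 then .inl p.2 else .inr p.2
  left_inv := by rintro (i | i) <;> simp
  right_inv := by
    rintro ⟨c, i⟩
    fin_cases c <;> simp

lemma kadison_schwarz {J n : ℕ} (ρ : Matrix (Fin J) (Fin J) ℂ →ₗ[ℂ] Matrix (Fin n) (Fin n) ℂ)
    (hunital : ρ 1 = 1) (h2 : TwoPositive ρ) (a : Matrix (Fin J) (Fin J) ℂ) :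
    (ρ (aᴴ * a) - (ρ a)ᴴ * ρ a).PosSemidef := by
  have hM := (amp_rho ρ h2 ![1, a]).submatrix (sumProdEquiv n)
  have hEq : (Matrix.of fun p q : Fin 2 × Fin n =>
      ρ ((![1, a] p.1)ᴴ * ![1, a] q.1) p.2 q.2).submatrix (sumProdEquiv n) (sumProdEquiv n)
      = Matrix.fromBlocks 1 (ρ a) (ρ a)ᴴ (ρ (aᴴ * a)) := by
    ext (i | i) (j | j) <;>
      simp [sumProdEquiv, Matrix.submatrix_apply, Matrix.fromBlocks, hunital,
        ← rho_star ρ h2]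
  rw [hEq] at hM
  have h1 : (1 : Matrix (Fin n) (Fin n) ℂ).PosDef := Matrix.PosDef.one
  haveI : Invertible (1 : Matrix (Fin n) (Fin n) ℂ) := invertibleOne
  have := (Matrix.PosDef.fromBlocks₁₁ (ρ a) (ρ (aᴴ * a)) h1).mp hM
  simpa [inv_one] using this

lemma dot_cs {m : ℕ} (v w : Fin m → ℂ) :
    ‖dotProduct (star v) w‖^2
      ≤ (dotProduct (star v) v).re * (dotProduct (star w) w).re := by
  set V : EuclideanSpace ℂ (Fin m) := (WithLp.equiv 2 (Fin m → ℂ)).symm v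
  set W : EuclideanSpace ℂ (Fin m) := (WithLp.equiv 2 (Fin m → ℂ)).symm w
  have h1 : inner ℂ V W = dotProduct (star v) w :=
    by rw [dotProduct_comm]; rfl
  have h2 : (dotProduct (star v) v).re = ‖V‖^2 := by
    have := inner_self_eq_norm_sq (𝕜 := ℂ) V
    rw [show inner ℂ V V = dotProduct (star v) v by rw [dotProduct_comm]; rfl] at this
    simpa using this
  have h3 : (dotProduct (star w) w).re = ‖W‖^2 := by
    have := inner_self_eq_norm_sq (𝕜 := ℂ) W
    rw [show inner ℂ W W = dotProduct (star w) w by rw [dotProduct_comm]; rfl] at this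
    simpa using this
  rw [← h1, h2, h3]
  calc ‖inner ℂ V W‖^2 ≤ (‖V‖ * ‖W‖)^2 := by
        apply pow_le_pow_left₀ (norm_nonneg _) (norm_inner_le_norm V W)
      _ = ‖V‖^2 * ‖W‖^2 := by ring

lemma one_sub_psd {J : ℕ} {p : Matrix (Fin J) (Fin J) ℂ} (hp : p.PosSemidef)
    (h2 : (1 - p * p).PosSemidef) : ((1 : Matrix (Fin J) (Fin J) ℂ) - p).PosSemidef := by
  refine Matrix.PosSemidef.of_dotProduct_mulVec_nonneg (Matrix.IsHermitian.sub Matrix.isHermitian_one hp.1) fun v => ?_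
  have hsv : (0:ℂ) ≤ dotProduct (star v) v := dotProduct_star_self_nonneg v
  have ht : (0:ℂ) ≤ dotProduct (star v) (p *ᵥ v) := hp.dotProduct_mulVec_nonneg v
  set s := dotProduct (star v) v with hs
  set t := dotProduct (star v) (p *ᵥ v) with htdef
  have key : t.re ≤ s.re := by
    have hpv : dotProduct (star (p *ᵥ v)) (p *ᵥ v)
        = dotProduct (star v) ((p * p) *ᵥ v) := by
      rw [Matrix.star_mulVec, Matrix.dotProduct_mulVec, Matrix.vecMul_vecMul,
        ← Matrix.dotProduct_mulVec, ← Matrix.mulVec_mulVec, hp.1.eq,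
        Matrix.mulVec_mulVec]
    have hle : (dotProduct (star v) ((p * p) *ᵥ v)).re ≤ s.re := by
      have := h2.re_dotProduct_nonneg v
      have hexp : dotProduct (star v) ((1 - p * p) *ᵥ v)
          = s - dotProduct (star v) ((p * p) *ᵥ v) := by
        rw [Matrix.sub_mulVec, dotProduct_sub, Matrix.one_mulVec]
      rw [hexp] at this
      simp only [RCLike.re_to_complex, Complex.sub_re] at this
      linarith
    have hcs := dot_cs v (p *ᵥ v)
    rw [hpv] at hcs
    have htre : ‖t‖ = t.re := by
      have h := Complex.le_def.mp ht
      have hteq : t = ((t.re : ℝ) : ℂ) := by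
        apply Complex.ext
        · rfl
        · simpa using h.2.symm
      have habs : ‖t‖ = |t.re| := by
        rw [hteq, Complex.norm_real, Real.norm_eq_abs]
        simp
      rw [habs]
      exact abs_of_nonneg (by simpa using h.1)
    have h0t : 0 ≤ t.re := by simpa using (Complex.le_def.mp ht).1
    have h0s : 0 ≤ s.re := by simpa using (Complex.le_def.mp hsv).1
    nlinarith [htre, hcs, hle]
  have him : t.im = 0 := by simpa using (Complex.le_def.mp ht).2.symm
  have hsim : s.im = 0 := by simpa using (Complex.le_def.mp hsv).2.symm
  have hexp : dotProduct (star v) ((1 - p) *ᵥ v) = s - t := by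
    rw [Matrix.sub_mulVec, dotProduct_sub, Matrix.one_mulVec]
  rw [hexp, Complex.le_def]
  constructor
  · simpa using key
  · simp [him, hsim]

lemma sq_diff_psd {J : ℕ} {p : Matrix (Fin J) (Fin J) ℂ} (hp : p.PosSemidef)
    (hsq : (1 - p * p).PosSemidef) :
    ((1 - p * p) - (1 - p) * (1 - p)).PosSemidef := by
  obtain ⟨q, hqH, hq2⟩ : ∃ q : Matrix (Fin J) (Fin J) ℂ, qᴴ = q ∧ q * q = p :=
    psd_sqrt_exists hp
  have h1p := one_sub_psd hp hsq
  have half : (p - p * p).PosSemidef := by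
    have h := h1p.conjTranspose_mul_mul_same q
    rw [hqH] at h
    convert h using 1
    rw [← hq2]
    noncomm_ring
  have heq : (1 - p * p) - (1 - p) * (1 - p) = (p - p * p) + (p - p * p) := by
    noncomm_ring
  rw [heq]
  exact Matrix.PosSemidef.add half half

lemma trace_conjTranspose_self {m : ℕ} (a : Matrix (Fin m) (Fin m) ℂ) :
    (Matrix.trace (aᴴ * a)) = ((Sq a : ℝ) : ℂ) := trace_star_self a

lemma S_triangle {m : ℕ} (a b : Matrix (Fin m) (Fin m) ℂ) :
    Real.sqrt (Sq (a + b)) ≤ Real.sqrt (Sq a) + Real.sqrt (Sq b) := by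
  have key : ∀ c : Matrix (Fin m) (Fin m) ℂ,
      Real.sqrt (Sq c)
        = ‖((WithLp.equiv 2 ((Fin m × Fin m) → ℂ)).symm (fun pq => c pq.1 pq.2) :
            EuclideanSpace ℂ (Fin m × Fin m))‖ := by
    intro c
    rw [EuclideanSpace.norm_eq, Sq]
    congr 1
    rw [Fintype.sum_prod_type, Finset.sum_comm]
    rfl
  rw [key, key, key]
  have hadd : ((WithLp.equiv 2 ((Fin m × Fin m) → ℂ)).symm (fun pq => (a + b) pq.1 pq.2) :
      EuclideanSpace ℂ (Fin m × Fin m))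
      = (WithLp.equiv 2 ((Fin m × Fin m) → ℂ)).symm (fun pq => a pq.1 pq.2)
        + (WithLp.equiv 2 ((Fin m × Fin m) → ℂ)).symm (fun pq => b pq.1 pq.2) := rfl
  rw [hadd]
  exact norm_add_le _ _

lemma eps_lt_sqrt {ε : ℝ} (h0 : 0 < ε) (h1 : ε < 1) : ε < Real.sqrt ε := by
  have hs : Real.sqrt ε ^ 2 = ε := Real.sq_sqrt h0.le
  have hp : 0 < Real.sqrt ε := Real.sqrt_pos.mpr h0
  have h2 : Real.sqrt ε < 1 := by
    rw [show (1:ℝ) = Real.sqrt 1 from Real.sqrt_one.symm]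
    exact Real.sqrt_lt_sqrt h0.le h1
  nlinarith

lemma final_ineq {ε : ℝ} (h0 : 0 < ε) (h1 : ε < 1/2) :
    ε + Real.sqrt (2 * ε) < 3 * Real.sqrt ε := by
  have h2e : Real.sqrt (2 * ε) = Real.sqrt 2 * Real.sqrt ε := Real.sqrt_mul (by norm_num) ε
  have hsqrt2 : Real.sqrt 2 ≤ 2 := by
    nlinarith [Real.sq_sqrt (show (0:ℝ) ≤ 2 by norm_num), Real.sqrt_nonneg 2]
  have hse : 0 ≤ Real.sqrt ε := Real.sqrt_nonneg ε
  have hlt : ε < Real.sqrt ε := eps_lt_sqrt h0 (by linarith)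
  have : Real.sqrt 2 * Real.sqrt ε ≤ 2 * Real.sqrt ε :=
    mul_le_mul_of_nonneg_right hsqrt2 hse
  rw [h2e]
  linarith

end Aux

/-- Kishimoto's lemma -/
theorem stmt9 {J n : ℕ} (hn : 0 < n)
    (ρ : Matrix (Fin J) (Fin J) ℂ →ₗ[ℂ] Matrix (Fin n) (Fin n) ℂ)
    (hunital : ρ 1 = 1) (h2pos : TwoPositive ρ)
    (u : Matrix (Fin n) (Fin n) ℂ) (hu : star u * u = 1) (hu' : u * star u = 1)
    (x v₀ p : Matrix (Fin J) (Fin J) ℂ)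
    (hx : (1 - star x * x).PosSemidef)
    (hv₀ : star v₀ * v₀ = 1) (hv₀' : v₀ * star v₀ = 1)
    (hp : p.PosSemidef) (hpsq : p * p = star x * x) (hpolar : x = v₀ * p)
    (ε : ℝ) (hε : 0 < ε) (hε' : ε < 1 / 2)
    (hclose : Real.sqrt (((Matrix.trace (star (u - ρ x) * (u - ρ x))) / n).re) < ε) :
    Real.sqrt (((Matrix.trace (star (u - ρ v₀) * (u - ρ v₀))) / n).re)
      < 3 * Real.sqrt ε := by
  classical
  have hre : ∀ a : Matrix (Fin n) (Fin n) ℂ,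
      ((Matrix.trace (star a * a)) / n).re = Sq a / n := by
    intro a
    rw [trace_star_self]
    have : ((Sq a : ℝ) : ℂ) / (n : ℂ) = ((Sq a / n : ℝ) : ℂ) := by push_cast; ring
    rw [this, Complex.ofReal_re]
  rw [hre] at hclose ⊢
  set s := Real.sqrt n with hsdef
  have hs : 0 < s := Real.sqrt_pos.mpr (by exact_mod_cast hn)
  have hdiv : ∀ a : Matrix (Fin n) (Fin n) ℂ,
      Real.sqrt (Sq a / n) = Real.sqrt (Sq a) / s :=
    fun a => Real.sqrt_div (Sq_nonneg a) n
  rw [hdiv] at hclose ⊢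
  rw [div_lt_iff₀ hs] at hclose ⊢
  -- hclose : √(Sq (u - ρ x)) < ε * s
  have hSu : Sq u = n := by
    have h := trace_star_self u
    rw [hu, Matrix.trace_one] at h
    have h2 : ((Sq u : ℝ) : ℂ) = ((n : ℝ) : ℂ) := by simpa using h.symm
    exact_mod_cast h2
  have hs2 : s * s = n := Real.mul_self_sqrt (by positivity)
  -- lower bound for ‖ρ x‖
  have hx_lower : (1 - ε) * s ≤ Real.sqrt (Sq (ρ x)) := by
    have hdecomp : u = (u - ρ x) + ρ x := by abel
    have htri : Real.sqrt (Sq u) ≤ Real.sqrt (Sq (u - ρ x)) + Real.sqrt (Sq (ρ x)) := by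
      nth_rewrite 1 [hdecomp]
      exact S_triangle _ _
    have hsu : Real.sqrt (Sq u) = s := by rw [hSu]
    rw [hsu] at htri
    nlinarith [hclose]
  -- Kadison-Schwarz for x : Sq (ρ x) ≤ re trace (ρ (star x * x))
  have hKS : ∀ a : Matrix (Fin J) (Fin J) ℂ,
      Sq (ρ a) ≤ (Matrix.trace (ρ (star a * a))).re := by
    intro a
    have hks := kadison_schwarz ρ hunital h2pos a
    have h0 := trace_nonneg_of_psd hks
    rw [Matrix.trace_sub] at h0
    have hle := sub_nonneg.mp h0
    have hres := (Complex.le_def.mp hle).1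
    rw [trace_conjTranspose_self] at hres
    show Sq (ρ a) ≤ (Matrix.trace (ρ (Matrix.conjTranspose a * a))).re
    simpa using hres
  have hx2 : (1 - ε)^2 * n ≤ (Matrix.trace (ρ (star x * x))).re := by
    have h1 := hKS x
    have h2 : ((1 - ε) * s)^2 ≤ Real.sqrt (Sq (ρ x)) ^ 2 := by
      apply pow_le_pow_left₀ (by nlinarith) hx_lower
    rw [Real.sq_sqrt (Sq_nonneg _)] at h2
    nlinarith
  -- bound on Sq (ρ x - ρ v₀)
  have h1pp : ((1 : Matrix (Fin J) (Fin J) ℂ) - p * p).PosSemidef := by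
    rw [hpsq]; exact hx
  have hb : ρ x - ρ v₀ = ρ (x - v₀) := (map_sub ρ x v₀).symm
  have hps : star p = p := hp.1
  have hbb : star (x - v₀) * (x - v₀) = (1 - p) * (1 - p) := by
    rw [hpolar]
    have h1 : v₀ * p - v₀ = v₀ * (p - 1) := by noncomm_ring
    rw [h1, star_mul]
    have h2 : star (p - 1) * star v₀ * (v₀ * (p - 1))
        = star (p - 1) * (star v₀ * v₀) * (p - 1) := by noncomm_ring
    rw [h2, hv₀, mul_one]
    rw [star_sub, star_one, hps]
    noncomm_ring
  have hβsq : Sq (ρ x - ρ v₀) ≤ 2 * ε * n := by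
    have h1 := hKS (x - v₀)
    rw [hbb] at h1
    -- trace (ρ ((1-p)(1-p))) ≤ trace (ρ (1 - p*p))
    have hd := sq_diff_psd hp h1pp
    have h2 := trace_nonneg_of_psd (rho_pos ρ h2pos hd)
    rw [map_sub, Matrix.trace_sub] at h2
    have h3 : Matrix.trace (ρ ((1 - p) * (1 - p))) ≤ Matrix.trace (ρ (1 - p * p)) :=
      sub_nonneg.mp h2
    have h4 : Matrix.trace (ρ (1 - p * p)) = (n : ℂ) - Matrix.trace (ρ (star x * x)) := by
      rw [show (1 : Matrix (Fin J) (Fin J) ℂ) - p * p = 1 - star x * x from by rw [hpsq]]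
      rw [map_sub, Matrix.trace_sub, hunital, Matrix.trace_one]
      simp
    rw [h4] at h3
    have h3re := (Complex.le_def.mp h3).1
    simp only [Complex.sub_re, Complex.natCast_re] at h3re
    have h5 : (Matrix.trace (ρ ((1 - p) * (1 - p)))).re ≤ n - (1 - ε)^2 * n := by
      linarith
    rw [hb]
    have hn' : (0:ℝ) < n := by exact_mod_cast hn
    nlinarith [h1, h5, hn', sq_nonneg ε, mul_nonneg (sq_nonneg ε) hn'.le]
  have hβ : Real.sqrt (Sq (ρ x - ρ v₀)) ≤ Real.sqrt (2 * ε) * s := by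
    have := Real.sqrt_le_sqrt hβsq
    rwa [Real.sqrt_mul (by positivity) (n : ℝ)] at this
  -- triangle for the goal
  have htri2 : Real.sqrt (Sq (u - ρ v₀))
      ≤ Real.sqrt (Sq (u - ρ x)) + Real.sqrt (Sq (ρ x - ρ v₀)) := by
    have hdecomp : u - ρ v₀ = (u - ρ x) + (ρ x - ρ v₀) := by abel
    rw [hdecomp]
    exact S_triangle _ _
  have hfinal : ε + Real.sqrt (2 * ε) < 3 * Real.sqrt ε := final_ineq hε hε'
  calc Real.sqrt (Sq (u - ρ v₀))
      ≤ Real.sqrt (Sq (u - ρ x)) + Real.sqrt (Sq (ρ x - ρ v₀)) := htri2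
    _ < ε * s + Real.sqrt (2 * ε) * s := by
        have := add_lt_add_of_lt_of_le hclose hβ
        linarith
    _ = (ε + Real.sqrt (2 * ε)) * s := by ring
    _ < (3 * Real.sqrt ε) * s := by
        apply mul_lt_mul_of_pos_right hfinal hs
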